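/- If S is a compact connected orientable surface with positive genus and nonempty boundary, then S admits a connected degree 2 cover S' in which every boundary component of S has exactly two preimage components, each mapping with degree 1. -/

import Mathlib

/-!
Model of a compact connected orientable surface `S` of genus `g` with `m + 1 ≥ 1`
boundary components: its fundamental group is free on generators
`a_1, b_1, …, a_g, b_g, c_1, …, c_m`, where the boundary circles represent the
conjugacy classes of `c_1, …, c_m` and of
`(∏ i ⁅a_i, b_i⁆ · c_1 ⋯ c_m)⁻¹` (the last boundary component).
`H_1(S;ℤ)` is the abelianization of this free group, and `H_1(∂S;ℤ) ≅ ℤ^{m+1}`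
has basis the fundamental classes of the boundary circles.
-/

/-- Generators of π₁ of the surface of genus `g` with `m+1` boundary components. -/
abbrev SurfGen (g m : ℕ) := (Fin g × Bool) ⊕ Fin m

/-- π₁ of the surface: free of rank `2g + m`. -/
abbrev SurfPi1 (g m : ℕ) := FreeGroup (SurfGen g m)

open scoped commutatorElement

/-- The commutator `⁅a_i, b_i⁆` of the `i`-th handle generators. -/
def handleComm (g m : ℕ) (i : Fin g) : SurfPi1 g m :=
  ⁅(FreeGroup.of (Sum.inl (i, false)) : SurfPi1 g m), FreeGroup.of (Sum.inl (i, true))⁆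

/-- The element of π₁ represented by the `i`-th boundary circle (with its
induced orientation). -/
def surfBoundary (g m : ℕ) (i : Fin (m + 1)) : SurfPi1 g m :=
  if h : (i : ℕ) < m then FreeGroup.of (Sum.inr ⟨i, h⟩)
  else ((List.ofFn (handleComm g m)).prod *
      (List.ofFn fun j : Fin m => (FreeGroup.of (Sum.inr j) : SurfPi1 g m)).prod)⁻¹

/-- The mod-2 intersection-number homomorphism: `a_1 ↦ 1`, all other
generators `↦ 0`. -/
def surfPhi (g m : ℕ) : SurfPi1 g m →* Multiplicative (ZMod 2) :=
  FreeGroup.lift fun x =>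
    match x with
    | Sum.inl (i, false) => if (i : ℕ) = 0 then Multiplicative.ofAdd (1 : ZMod 2) else 1
    | _ => 1

lemma surfPhi_boundary (g m : ℕ) (i : Fin (m + 1)) :
    surfPhi g m (surfBoundary g m i) = 1 := by
  have hc : ∀ j : Fin m, surfPhi g m (FreeGroup.of (Sum.inr j)) = 1 := by
    intro j; simp [surfPhi]
  have hcomm : ∀ i : Fin g, surfPhi g m (handleComm g m i) = 1 := by
    intro i
    simp only [handleComm, commutatorElement_def, map_mul, map_inv]
    have : ∀ x y : Multiplicative (ZMod 2), x * y * x⁻¹ * y⁻¹ = 1 := by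
      intro x y; rw [mul_comm x y]; group
    apply this
  unfold surfBoundary
  split
  · exact hc _
  · rw [map_inv, map_mul, inv_eq_one]
    have h1 : (List.ofFn (handleComm g m)).prod ∈ (MonoidHom.ker (surfPhi g m)) := by
      apply Subgroup.list_prod_mem
      intro x hx
      obtain ⟨j, rfl⟩ := List.mem_ofFn.1 hx
      exact hcomm j
    have h2 : (List.ofFn fun j : Fin m => (FreeGroup.of (Sum.inr j) : SurfPi1 g m)).prod ∈
        (MonoidHom.ker (surfPhi g m)) := by
      apply Subgroup.list_prod_mem
      intro x hx
      obtain ⟨j, rfl⟩ := List.mem_ofFn.1 hx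
      exact hc j
    rw [MonoidHom.mem_ker] at h1 h2
    rw [h1, h2, one_mul]

/-!
Covering-space dictionary.  A connected degree-2 cover of `S` corresponds to an
index-2 subgroup `K ≤ π₁(S)`.  The boundary components of the cover lying over
`∂_i` correspond to the double cosets `K\π₁(S)/⟨∂_i⟩`, and the component
corresponding to the coset of `u` covers `∂_i` with degree the least `n > 0`
with `u ∂_i^n u⁻¹ ∈ K`; so degree `1` for every component means
`u ∂_i u⁻¹ ∈ K` for all `u`.
-/

/-- If `b ∈ K` and `K` is normal, the double coset space `K\G/⟨b⟩` is just `G/K`. -/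
noncomputable def dosetEquivQuotient {G : Type*} [Group G] (K : Subgroup G) [K.Normal]
    {b : G} (hb : b ∈ K) :
    DoubleCoset.Quotient (K : Set G) (Subgroup.zpowers b : Set G) ≃ (G ⧸ K) := by
  refine Quotient.congrRight ?_
  intro x y
  rw [DoubleCoset.rel_iff, QuotientGroup.leftRel_apply]
  constructor
  · rintro ⟨h, hh, k, hk, rfl⟩
    obtain ⟨n, rfl⟩ := Subgroup.mem_zpowers_iff.1 hk
    have : x⁻¹ * h * x ∈ K := Subgroup.Normal.conj_mem' ‹K.Normal› h hh x
    have hb' : b ^ n ∈ K := K.zpow_mem hb n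
    have : (x⁻¹ * h * x) * b ^ n ∈ K := K.mul_mem this hb'
    convert this using 1; group
  · intro h
    refine ⟨x * (x⁻¹ * y) * x⁻¹, ?_, 1, Subgroup.one_mem _, by group⟩
    exact Subgroup.Normal.conj_mem ‹K.Normal› _ h x

/-- If `S` is a compact connected orientable surface with
positive genus and nonempty boundary, then `S` admits a connected degree-2
cover in which every boundary component of `S` has exactly two preimage
components, each mapping with degree 1. -/
theorem double_cover_splitting_boundary (g m : ℕ) (hg : 0 < g) :
    ∃ K : Subgroup (SurfPi1 g m), K.index = 2 ∧
      ∀ i : Fin (m + 1),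
        (∀ u : SurfPi1 g m, u * surfBoundary g m i * u⁻¹ ∈ K) ∧
        Nat.card (DoubleCoset.Quotient (K : Set (SurfPi1 g m))
          (Subgroup.zpowers (surfBoundary g m i) : Set (SurfPi1 g m))) = 2 := by
  refine ⟨MonoidHom.ker (surfPhi g m), ?_, ?_⟩
  · have hsurj : Function.Surjective (surfPhi g m) := by
      intro x
      induction x using Multiplicative.rec with
      | _ x =>
        fin_cases x
        · exact ⟨1, map_one _⟩
        · exact ⟨FreeGroup.of (Sum.inl (⟨0, hg⟩, false)), by simp [surfPhi]; rfl⟩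
    rw [Subgroup.index_ker, MonoidHom.range_eq_top_of_surjective _ hsurj]
    rw [Nat.card_congr Subgroup.topEquiv.toEquiv]
    simp [Nat.card_eq_fintype_card]
  · intro i
    have hbK : surfBoundary g m i ∈ MonoidHom.ker (surfPhi g m) :=
      MonoidHom.mem_ker.2 (surfPhi_boundary g m i)
    constructor
    · intro u
      exact Subgroup.Normal.conj_mem (MonoidHom.normal_ker _) _ hbK u
    · have : Nat.card (DoubleCoset.Quotient ((MonoidHom.ker (surfPhi g m) : Subgroup (SurfPi1 g m)) : Set (SurfPi1 g m))
          (Subgroup.zpowers (surfBoundary g m i) : Set (SurfPi1 g m)))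
          = Nat.card (SurfPi1 g m ⧸ MonoidHom.ker (surfPhi g m)) := by
        haveI : (MonoidHom.ker (surfPhi g m)).Normal := MonoidHom.normal_ker _
        exact Nat.card_congr (dosetEquivQuotient _ hbK)
      rw [this, ← Subgroup.index, Subgroup.index_ker]
      have hsurj : Function.Surjective (surfPhi g m) := by
        intro x
        induction x using Multiplicative.rec with
        | _ x =>
          fin_cases x
          · exact ⟨1, map_one _⟩
          · exact ⟨FreeGroup.of (Sum.inl (⟨0, hg⟩, false)), by simp [surfPhi]; rfl⟩
      rw [MonoidHom.range_eq_top_of_surjective _ hsurj]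
      rw [Nat.card_congr Subgroup.topEquiv.toEquiv]
      simp [Nat.card_eq_fintype_card]
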